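/- (Rate-of-convergence sequence lemma.) Let θ ∈ (0,1), M > 0, and let (Δ_n)_{n≥0} be a nonincreasing sequence of nonnegative real numbers converging to 0 such that Δ_n ≤ M (Δ_{n−1} − Δ_n)^{(1−θ)/θ} + (Δ_{n−1} − Δ_n) for all n ≥ 1. Then: (i) if θ ∈ (0, 1/2), there exist c > 0 and τ ∈ [0,1) such that Δ_n ≤ c τ^n for all n; (ii) if θ ∈ (1/2, 1), there exists c > 0 such that Δ_n ≤ c n^{−(1−θ)/(2θ−1)} for all n ≥ 1. -/

import Mathlib

lemma aux_rpow_convex {a b p : ℝ} (ha : 0 < a) (hab : a ≤ b) (hp : p < 0) :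
    (-p) * b ^ (p - 1) * (b - a) ≤ a ^ p - b ^ p := by
  rcases eq_or_lt_of_le hab with rfl | hab'
  · simp
  · have hb : 0 < b := ha.trans hab'
    obtain ⟨c, hc, hceq⟩ := exists_hasDerivAt_eq_slope (fun x => x ^ p)
      (fun x => p * x ^ (p - 1)) hab'
      (fun x hx => by
        have hx0 : (0:ℝ) < x := lt_of_lt_of_le ha hx.1
        exact (Real.hasDerivAt_rpow_const (Or.inl hx0.ne')).continuousAt.continuousWithinAt)
      (fun x hx => Real.hasDerivAt_rpow_const (Or.inl (ha.trans hx.1).ne'))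
    have hc0 : 0 < c := ha.trans hc.1
    have hkey : b ^ p - a ^ p = p * c ^ (p - 1) * (b - a) := by
      have hba : b - a ≠ 0 := sub_ne_zero.mpr hab'.ne'
      rw [eq_div_iff hba] at hceq
      linarith [hceq]
    have hmono : b ^ (p - 1) ≤ c ^ (p - 1) :=
      Real.rpow_le_rpow_of_nonpos hc0 hc.2.le (by linarith)
    have heq2 : a ^ p - b ^ p = (-p) * c ^ (p - 1) * (b - a) := by linarith [hkey]
    rw [heq2]
    have h1 : 0 ≤ -p := by linarith
    have h2 : 0 ≤ b - a := by linarith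
    exact mul_le_mul_of_nonneg_right (mul_le_mul_of_nonneg_left hmono h1) h2

set_option maxHeartbeats 1000000 in
theorem stmt_19 (θ : ℝ) (hθ : θ ∈ Set.Ioo (0 : ℝ) 1) (M : ℝ) (hM : 0 < M)
    (Δ : ℕ → ℝ) (hnn : ∀ n, 0 ≤ Δ n) (hmono : ∀ n, Δ (n + 1) ≤ Δ n)
    (hlim : Filter.Tendsto Δ Filter.atTop (nhds 0))
    (hrec : ∀ n : ℕ, 1 ≤ n →
      Δ n ≤ M * (Δ (n - 1) - Δ n) ^ ((1 - θ) / θ) + (Δ (n - 1) - Δ n)) :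
    (θ < 1 / 2 → ∃ c : ℝ, 0 < c ∧ ∃ τ : ℝ, 0 ≤ τ ∧ τ < 1 ∧ ∀ n : ℕ, Δ n ≤ c * τ ^ n) ∧
    (1 / 2 < θ → ∃ c : ℝ, 0 < c ∧ ∀ n : ℕ, 1 ≤ n →
      Δ n ≤ c * (n : ℝ) ^ (-(1 - θ) / (2 * θ - 1))) := by
  obtain ⟨hθ0, hθ1⟩ := hθ
  have hA : Antitone Δ := antitone_nat_of_succ_le hmono
  obtain ⟨N, hN⟩ : ∃ N, ∀ n ≥ N, Δ n < 1 :=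
    Filter.eventually_atTop.mp (hlim.eventually_lt_const one_pos)
  constructor
  · -- θ < 1/2
    intro h2
    have hα : 1 < (1 - θ) / θ := (one_lt_div hθ0).mpr (by linarith)
    set τ : ℝ := (M + 1) / (M + 2) with hτ
    have hτpos : 0 < τ := by positivity
    have hτ1 : τ < 1 := by rw [hτ, div_lt_one (by linarith)]; linarith
    have hstep : ∀ m, N ≤ m → Δ (m + 1) ≤ τ * Δ m := by
      intro m hm
      have hrec' := hrec (m + 1) (by omega)
      rw [Nat.add_sub_cancel] at hrec'
      have hd0 : 0 ≤ Δ m - Δ (m + 1) := sub_nonneg.mpr (hmono m)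
      have hd1 : Δ m - Δ (m + 1) ≤ 1 := by
        have h := (hN m hm).le; have := hnn (m + 1); linarith
      have hpow : (Δ m - Δ (m + 1)) ^ ((1 - θ) / θ) ≤ Δ m - Δ (m + 1) := by
        rcases eq_or_lt_of_le hd0 with h | h
        · rw [← h, Real.zero_rpow (by positivity)]
        · calc (Δ m - Δ (m + 1)) ^ ((1 - θ) / θ) ≤ (Δ m - Δ (m + 1)) ^ (1 : ℝ) :=
              Real.rpow_le_rpow_of_exponent_ge h hd1 hα.le
            _ = Δ m - Δ (m + 1) := Real.rpow_one _
      have h3 : Δ (m + 1) ≤ (M + 1) * (Δ m - Δ (m + 1)) := by nlinarith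
      rw [hτ, div_mul_eq_mul_div, le_div_iff₀ (by linarith)]
      nlinarith [hnn (m + 1)]
    have hgeo : ∀ k, Δ (N + k) ≤ Δ N * τ ^ k := by
      intro k
      induction k with
      | zero => simp
      | succ k ih =>
        calc Δ (N + (k + 1)) = Δ ((N + k) + 1) := by ring_nf
          _ ≤ τ * Δ (N + k) := hstep (N + k) (Nat.le_add_right N k)
          _ ≤ τ * (Δ N * τ ^ k) := mul_le_mul_of_nonneg_left ih hτpos.le
          _ = Δ N * τ ^ (k + 1) := by ring
    refine ⟨(Δ 0 + 1) / τ ^ N, div_pos (by linarith [hnn 0]) (pow_pos hτpos N),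
      τ, hτpos.le, hτ1, ?_⟩
    intro n
    rcases le_or_gt n N with h | h
    · have h1 : Δ n ≤ Δ 0 := hA (Nat.zero_le n)
      have h2' : τ ^ N ≤ τ ^ n := pow_le_pow_of_le_one hτpos.le hτ1.le h
      rw [div_mul_eq_mul_div, le_div_iff₀ (pow_pos hτpos N)]
      exact mul_le_mul (by linarith) h2' (pow_pos hτpos N).le (by linarith [hnn 0])
    · obtain ⟨k, rfl⟩ : ∃ k, n = N + k := ⟨n - N, by omega⟩
      have h1 := hgeo k
      have hΔN : Δ N ≤ Δ 0 + 1 := le_trans (hA (Nat.zero_le N)) (by linarith [hnn 0])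
      rw [div_mul_eq_mul_div, le_div_iff₀ (pow_pos hτpos N)]
      calc Δ (N + k) * τ ^ N ≤ (Δ N * τ ^ k) * τ ^ N :=
            mul_le_mul_of_nonneg_right h1 (pow_pos hτpos N).le
        _ = Δ N * τ ^ (N + k) := by rw [pow_add]; ring
        _ ≤ (Δ 0 + 1) * τ ^ (N + k) :=
            mul_le_mul_of_nonneg_right hΔN (pow_pos hτpos _).le
  · -- 1/2 < θ
    intro h2
    have h1θ : 0 < 1 - θ := by linarith
    have h2θ : 0 < 2 * θ - 1 := by linarith
    obtain ⟨β, hβ⟩ : ∃ β : ℝ, β = θ / (1 - θ) := ⟨_, rfl⟩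
    have hβ1 : 1 < β := by rw [hβ, lt_div_iff₀ h1θ]; linarith
    have hβ0 : 0 < β := by linarith
    obtain ⟨p, hp⟩ : ∃ p : ℝ, p = 1 - β := ⟨_, rfl⟩
    have hp0 : p < 0 := by rw [hp]; linarith
    have hpne : p ≠ 0 := ne_of_lt hp0
    have hEp : -(1 - θ) / (2 * θ - 1) = 1 / p := by
      rw [eq_div_iff hpne, hp, hβ, div_mul_eq_mul_div, div_eq_one_iff_eq h2θ.ne']
      field_simp
      ring
    have hαβ : (1 - θ) / θ * β = 1 := by rw [hβ]; field_simp
    have h2β : 1 < (2 : ℝ) ^ (β - 1) := by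
      rw [show β - 1 = -p by rw [hp]; ring]
      exact Real.one_lt_rpow_iff_of_pos (by norm_num) |>.mpr
        (Or.inl ⟨by norm_num, by linarith⟩)
    rcases eq_or_lt_of_le (hnn 0) with h00 | h00
    · refine ⟨1, one_pos, fun n hn => ?_⟩
      have hz : Δ n ≤ 0 := by rw [h00]; exact hA (Nat.zero_le n)
      have : Δ n = 0 := le_antisymm hz (hnn n)
      rw [this, one_mul]
      exact Real.rpow_nonneg (Nat.cast_nonneg n) _
    obtain ⟨K, hKdef⟩ : ∃ K : ℝ, K = (M + 1) ^ β := ⟨_, rfl⟩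
    have hK : 0 < K := hKdef ▸ Real.rpow_pos_of_pos (by linarith) β
    have hstep : ∀ m, N ≤ m → Δ (m + 1) ^ β ≤ K * (Δ m - Δ (m + 1)) := by
      intro m hm
      have hrec' := hrec (m + 1) (by omega)
      rw [Nat.add_sub_cancel] at hrec'
      have hd0 : 0 ≤ Δ m - Δ (m + 1) := sub_nonneg.mpr (hmono m)
      have hd1 : Δ m - Δ (m + 1) ≤ 1 := by
        have h := (hN m hm).le; have := hnn (m + 1); linarith
      have hpow : Δ m - Δ (m + 1) ≤ (Δ m - Δ (m + 1)) ^ ((1 - θ) / θ) := by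
        rcases eq_or_lt_of_le hd0 with h | h
        · rw [← h, Real.zero_rpow (by positivity)]
        · calc Δ m - Δ (m + 1) = (Δ m - Δ (m + 1)) ^ (1 : ℝ) := (Real.rpow_one _).symm
            _ ≤ (Δ m - Δ (m + 1)) ^ ((1 - θ) / θ) :=
              Real.rpow_le_rpow_of_exponent_ge h hd1
                (by rw [div_le_one hθ0]; linarith)
      have h3 : Δ (m + 1) ≤ (M + 1) * (Δ m - Δ (m + 1)) ^ ((1 - θ) / θ) := by
        nlinarith
      have h4 : Δ (m + 1) ^ β ≤ ((M + 1) * (Δ m - Δ (m + 1)) ^ ((1 - θ) / θ)) ^ β :=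
        Real.rpow_le_rpow (hnn _) h3 hβ0.le
      rwa [Real.mul_rpow (by linarith) (Real.rpow_nonneg hd0 _),
        ← Real.rpow_mul hd0, hαβ, Real.rpow_one, ← hKdef] at h4
    obtain ⟨ν, hνdef⟩ : ∃ ν : ℝ,
        ν = min ((β - 1) * K⁻¹ * (1 / 2 : ℝ) ^ β) (((2 : ℝ) ^ (β - 1) - 1) * Δ 0 ^ p) :=
      ⟨_, rfl⟩
    have hν0 : 0 < ν := by
      rw [hνdef]
      apply lt_min
      · exact mul_pos (mul_pos (by linarith) (inv_pos.mpr hK))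
          (Real.rpow_pos_of_pos (by norm_num) β)
      · exact mul_pos (by linarith) (Real.rpow_pos_of_pos h00 p)
    have hkey : ∀ m, N ≤ m → 0 < Δ (m + 1) → ν ≤ Δ (m + 1) ^ p - Δ m ^ p := by
      intro m hm hpos
      have hpos' : 0 < Δ m := lt_of_lt_of_le hpos (hmono m)
      have hs := hstep m hm
      rcases le_or_gt (Δ m) (2 * Δ (m + 1)) with hcase | hcase
      · have hcv := aux_rpow_convex hpos (hmono m) hp0
        have hd : K⁻¹ * Δ (m + 1) ^ β ≤ Δ m - Δ (m + 1) := by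
          rw [inv_mul_le_iff₀ hK]; exact hs
        have hb : Δ m ^ (p - 1) = (Δ m ^ β)⁻¹ := by
          rw [show p - 1 = -β by rw [hp]; ring, Real.rpow_neg hpos'.le]
        have hfrac : (1 / 2 : ℝ) ^ β ≤ Δ (m + 1) ^ β / Δ m ^ β := by
          rw [← Real.div_rpow (hnn _) hpos'.le]
          exact Real.rpow_le_rpow (by norm_num)
            (by rw [le_div_iff₀ hpos']; linarith) hβ0.le
        have hΔmβ : 0 < Δ m ^ β := Real.rpow_pos_of_pos hpos' β
        calc ν ≤ (β - 1) * K⁻¹ * (1 / 2 : ℝ) ^ β := hνdef ▸ min_le_left _ _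
          _ ≤ (β - 1) * K⁻¹ * (Δ (m + 1) ^ β / Δ m ^ β) :=
            mul_le_mul_of_nonneg_left hfrac
              (mul_nonneg (by linarith) (inv_pos.mpr hK).le)
          _ = (-p) * Δ m ^ (p - 1) * (K⁻¹ * Δ (m + 1) ^ β) := by
            rw [hb, show -p = β - 1 by rw [hp]; ring, div_eq_mul_inv]
            ring
          _ ≤ (-p) * Δ m ^ (p - 1) * (Δ m - Δ (m + 1)) := by
            apply mul_le_mul_of_nonneg_left hd
            have : 0 < Δ m ^ (p - 1) := Real.rpow_pos_of_pos hpos' _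
            nlinarith
          _ ≤ Δ (m + 1) ^ p - Δ m ^ p := hcv
      · have h5 : Δ (m + 1) ≤ Δ m / 2 := by linarith
        have h6 : (Δ m / 2) ^ p ≤ Δ (m + 1) ^ p :=
          Real.rpow_le_rpow_of_nonpos hpos h5 hp0.le
        have h7 : (Δ m / 2) ^ p = Δ m ^ p / 2 ^ p :=
          Real.div_rpow hpos'.le (by norm_num : (0:ℝ) ≤ 2) p
        rw [h7] at h6
        have h8 : (2 : ℝ) ^ (β - 1) = ((2 : ℝ) ^ p)⁻¹ := by
          rw [show β - 1 = -p by rw [hp]; ring, Real.rpow_neg (by norm_num)]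
        have h9 : Δ 0 ^ p ≤ Δ m ^ p :=
          Real.rpow_le_rpow_of_nonpos hpos' (hA (Nat.zero_le m)) hp0.le
        calc ν ≤ ((2 : ℝ) ^ (β - 1) - 1) * Δ 0 ^ p := hνdef ▸ min_le_right _ _
          _ ≤ ((2 : ℝ) ^ (β - 1) - 1) * Δ m ^ p :=
            mul_le_mul_of_nonneg_left h9 (by linarith)
          _ = Δ m ^ p / 2 ^ p - Δ m ^ p := by
            rw [h8, div_eq_mul_inv]; ring
          _ ≤ Δ (m + 1) ^ p - Δ m ^ p := by linarith
    have htel : ∀ k : ℕ, 0 < Δ (N + 1 + k) → ν * k ≤ Δ (N + 1 + k) ^ p := by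
      intro k
      induction k with
      | zero =>
        intro h
        simpa using (Real.rpow_pos_of_pos h p).le
      | succ k ih =>
        intro hpos
        have hpos0 : 0 < Δ ((N + 1 + k) + 1) := by
          rw [show (N + 1 + k) + 1 = N + 1 + (k + 1) from by omega]
          exact hpos
        have hpk : 0 < Δ (N + 1 + k) := lt_of_lt_of_le hpos0 (hmono _)
        have hik := ih hpk
        have hk := hkey (N + 1 + k) (by omega) hpos0
        have heq : N + 1 + (k + 1) = (N + 1 + k) + 1 := by omega
        rw [heq]
        push_cast
        linarith
    set n₀ := N + 1 with hn₀
    obtain ⟨c₂, hc₂def⟩ : ∃ c₂ : ℝ,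
        c₂ = (Δ 1 + 1) * ((2 * n₀ : ℕ) : ℝ) ^ (-(1 / p)) := ⟨_, rfl⟩
    have h2n₀ : (0 : ℝ) < ((2 * n₀ : ℕ) : ℝ) := by
      have : 0 < 2 * n₀ := by omega
      exact_mod_cast this
    have hc₂ : 0 < c₂ := by
      rw [hc₂def]
      have := Real.rpow_pos_of_pos h2n₀ (-(1 / p))
      nlinarith [hnn 1]
    refine ⟨max ((ν / 2) ^ (1 / p)) c₂, lt_max_of_lt_left
      (Real.rpow_pos_of_pos (by linarith) _), fun n hn => ?_⟩
    rw [hEp]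
    have hn0 : (0 : ℝ) < (n : ℝ) := by exact_mod_cast hn
    have hnp : (0 : ℝ) < (n : ℝ) ^ (1 / p) := Real.rpow_pos_of_pos hn0 _
    rcases le_or_gt (2 * n₀) n with hbig | hsmall
    · rcases eq_or_lt_of_le (hnn n) with hz | hz
      · rw [← hz]
        have hmx : (0:ℝ) ≤ max ((ν / 2) ^ (1 / p)) c₂ :=
          le_max_of_le_left (Real.rpow_pos_of_pos (by linarith) _).le
        exact mul_nonneg hmx hnp.le
      · obtain ⟨k, hk⟩ : ∃ k, n = n₀ + k := ⟨n - n₀, by omega⟩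
        have htl : ν * k ≤ Δ n ^ p := by
          rw [hk] at hz ⊢
          exact htel k hz
        have hk2 : (n : ℝ) / 2 ≤ (k : ℝ) := by
          have : n ≤ 2 * k := by omega
          have h' : (n : ℝ) ≤ 2 * k := by exact_mod_cast this
          linarith
        have hνn : ν * n / 2 ≤ Δ n ^ p := by
          have : ν * (n / 2) ≤ ν * k := mul_le_mul_of_nonneg_left hk2 hν0.le
          calc ν * n / 2 = ν * ((n : ℝ) / 2) := by ring
            _ ≤ ν * k := this
            _ ≤ Δ n ^ p := htl
        have hνn0 : 0 < ν * n / 2 := by positivity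
        have hinv := Real.rpow_le_rpow_of_nonpos hνn0 hνn
          (le_of_lt (div_neg_of_pos_of_neg one_pos hp0))
        have hL : (Δ n ^ p) ^ (1 / p) = Δ n := by
          rw [← Real.rpow_mul (hnn n), mul_one_div_cancel hpne, Real.rpow_one]
        have hR : (ν * ↑n / 2) ^ (1 / p) = (ν / 2) ^ (1 / p) * (n : ℝ) ^ (1 / p) := by
          rw [show ν * (n : ℝ) / 2 = (ν / 2) * n by ring,
            Real.mul_rpow (by linarith) hn0.le]
        rw [hL, hR] at hinv
        exact le_trans hinv
          (mul_le_mul_of_nonneg_right (le_max_left _ _) hnp.le)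
    · have h10 : Δ n ≤ Δ 1 := hA hn
      have hexp : ((2 * n₀ : ℕ) : ℝ) ^ (1 / p) ≤ (n : ℝ) ^ (1 / p) := by
        apply Real.rpow_le_rpow_of_nonpos hn0 (by exact_mod_cast hsmall.le)
        exact (div_neg_of_pos_of_neg one_pos hp0).le
      have hprod : ((2 * n₀ : ℕ) : ℝ) ^ (-(1 / p)) * ((2 * n₀ : ℕ) : ℝ) ^ (1 / p) = 1 := by
        rw [← Real.rpow_add h2n₀, show -(1 / p) + 1 / p = 0 by ring, Real.rpow_zero]
      calc Δ n ≤ c₂ * ((2 * n₀ : ℕ) : ℝ) ^ (1 / p) := by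
            rw [hc₂def, mul_assoc, hprod, mul_one]; linarith
        _ ≤ (max ((ν / 2) ^ (1 / p)) c₂) * ((2 * n₀ : ℕ) : ℝ) ^ (1 / p) :=
            mul_le_mul_of_nonneg_right (le_max_right _ _)
              (Real.rpow_pos_of_pos h2n₀ _).le
        _ ≤ (max ((ν / 2) ^ (1 / p)) c₂) * (n : ℝ) ^ (1 / p) :=
            mul_le_mul_of_nonneg_left hexp
              (le_trans (Real.rpow_pos_of_pos (by linarith : (0:ℝ) < ν/2) (1/p)).le
                (le_max_left _ _))
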